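/- Let G be a consistent perfect-information stochastic game with finitely many vertices and a tail winning condition W. Then for every initial vertex v_0, all strategies σ, τ, and every n ∈ ℕ, E^{σ,τ}_{v_0}[val(V_n)] = val(v_0); in particular, for any stopping time N (with respect to the filtration generated by (V_n)) and every n ∈ ℕ, E^{σ,τ}_{v_0}[val(V_{min(N,n)})] = val(v_0). -/

import Mathlib

open MeasureTheory ProbabilityTheory Filter Topology

attribute [local instance] Classical.propDecidable

namespace StochasticGames

/-- A perfect-information stochastic game arena: a partition of the finite vertex set into
Max vertices, min vertices and random vertices, an edge relation such that every vertex has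
an outgoing edge, and transition probabilities at random vertices, positive exactly on edges. -/
structure Game (V : Type) [Fintype V] where
  VMax : Set V
  Vmin : Set V
  VR : Set V
  E : V → V → Prop
  p : V → V → ℝ
  cover : ∀ v, v ∈ VMax ∨ v ∈ Vmin ∨ v ∈ VR
  disjMm : Disjoint VMax Vmin
  disjMR : Disjoint VMax VR
  disjmR : Disjoint Vmin VR
  succ_exists : ∀ v, ∃ w, E v w
  p_nonneg : ∀ v ∈ VR, ∀ w, 0 ≤ p v w
  p_sum : ∀ v ∈ VR, ∑ w, p v w = 1
  p_pos_iff : ∀ v ∈ VR, ∀ w, (0 < p v w ↔ E v w)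

variable {V : Type} [Fintype V] [MeasurableSpace V] [DiscreteMeasurableSpace V]

/-- The cylinder of plays starting with the finite word `h`. -/
def cyl (h : List V) : Set (ℕ → V) :=
  {ω | ∀ i : Fin h.length, ω i = h.get i}

/-- Prepend a finite word to an infinite word. -/
def prepend (h : List V) (q : ℕ → V) : ℕ → V :=
  fun n => if hn : n < h.length then h.get ⟨n, hn⟩ else q (n - h.length)

/-- A winning condition is tail if it is invariant under adding/removing finite prefixes. -/
def IsTail (W : Set (ℕ → V)) : Prop :=
  ∀ (h : List V) (q : ℕ → V), q ∈ W ↔ prepend h q ∈ W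

/-- A finite play: a nonempty word whose consecutive vertices are linked by edges. -/
def Game.FinitePlay (G : Game V) (h : List V) : Prop :=
  h ≠ [] ∧ h.Chain' G.E

/-- A strategy for player Max: after any finite play ending in a Max vertex,
it chooses a successor along an edge. -/
def Game.IsMaxStrategy (G : Game V) (σ : List V → V) : Prop :=
  ∀ h : List V, G.FinitePlay h → ∀ v, h.getLast? = some v → v ∈ G.VMax → G.E v (σ h)

/-- A strategy for player min. -/
def Game.IsMinStrategy (G : Game V) (τ : List V → V) : Prop :=
  ∀ h : List V, G.FinitePlay h → ∀ v, h.getLast? = some v → v ∈ G.Vmin → G.E v (τ h)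

/-- `μ` is the probability measure on plays induced by the initial vertex `v` and the
strategies `σ` (for Max) and `τ` (for min): the play starts at `v` almost surely and,
conditionally on any finite prefix of positive probability, the next vertex is chosen by
`σ`, by `τ`, or according to `G.p`, depending on the owner of the current vertex. -/
def Game.IsInduced (G : Game V) (σ τ : List V → V) (v : V) (μ : Measure (ℕ → V)) : Prop :=
  IsProbabilityMeasure μ ∧
  μ {ω | ω 0 = v} = 1 ∧
  ∀ (h : List V) (u : V), h.getLast? = some u → μ (cyl h) ≠ 0 →
    (u ∈ G.VMax → ProbabilityTheory.cond μ (cyl h) {ω | ω h.length = σ h} = 1) ∧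
    (u ∈ G.Vmin → ProbabilityTheory.cond μ (cyl h) {ω | ω h.length = τ h} = 1) ∧
    (u ∈ G.VR → ∀ w, ProbabilityTheory.cond μ (cyl h) {ω | ω h.length = w} =
      ENNReal.ofReal (G.p u w))

/-- A family of measures indexed by a pair of strategies and an initial vertex. -/
abbrev StratFam (V : Type) [MeasurableSpace V] :=
  (List V → V) → (List V → V) → V → Measure (ℕ → V)

/-- `P` assigns to every pair of strategies and every initial vertex the induced
probability measure on plays. -/
def Game.IsInducedFam (G : Game V) (P : StratFam V) : Prop :=
  ∀ σ τ v, G.IsInduced σ τ v (P σ τ v)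

/-- The value of a vertex: `val(v) = sup_σ inf_τ P^{σ,τ}_v(W)`. -/
noncomputable def Game.val (G : Game V) (W : Set (ℕ → V)) (P : StratFam V) (v : V) : ℝ :=
  ⨆ σ : {σ // G.IsMaxStrategy σ}, ⨅ τ : {τ // G.IsMinStrategy τ}, (P σ.1 τ.1 v W).toReal

/-- An optimal strategy for Max: it guarantees winning with probability `val(v)` from
every vertex `v`. -/
def Game.OptimalMax (G : Game V) (W : Set (ℕ → V)) (P : StratFam V) (σ : List V → V) : Prop :=
  G.IsMaxStrategy σ ∧
  ∀ v, (⨅ τ : {τ // G.IsMinStrategy τ}, (P σ τ.1 v W).toReal) = G.val W P v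

/-- An optimal strategy for min. -/
def Game.OptimalMin (G : Game V) (W : Set (ℕ → V)) (P : StratFam V) (τ : List V → V) : Prop :=
  G.IsMinStrategy τ ∧
  ∀ v, (⨆ σ : {σ // G.IsMaxStrategy σ}, (P σ.1 τ v W).toReal) = G.val W P v

/-- An `ε`-optimal strategy for Max. -/
def Game.EpsOptimalMax (G : Game V) (W : Set (ℕ → V)) (P : StratFam V) (ε : ℝ)
    (σ : List V → V) : Prop :=
  G.IsMaxStrategy σ ∧
  ∀ v, G.val W P v - ε ≤ ⨅ τ : {τ // G.IsMinStrategy τ}, (P σ τ.1 v W).toReal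

/-- A game is consistent if no edge out of a Max or min vertex changes the value. -/
def Game.Consistent (G : Game V) (W : Set (ℕ → V)) (P : StratFam V) : Prop :=
  ∀ v w, G.E v w → (v ∈ G.VMax ∨ v ∈ G.Vmin) → G.val W P v = G.val W P w

/-- The quality of the strategy `σ` after a finite play `v₀ v₁ ⋯ vₙ`:
`inf_τ P^{σ,τ}_{v₀}(W ∣ V₀ = v₀, …, Vₙ = vₙ)`. -/
noncomputable def Game.qual (G : Game V) (W : Set (ℕ → V)) (P : StratFam V)
    (σ : List V → V) : List V → ℝ
  | [] => 0
  | v :: l => ⨅ τ : {τ // G.IsMinStrategy τ},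
      (ProbabilityTheory.cond (P σ τ.1 v) (cyl (v :: l)) W).toReal

/-- The finite play `ω 0, ω 1, …, ω n`. -/
def prefixList (ω : ℕ → V) (n : ℕ) : List V := List.ofFn (fun i : Fin (n + 1) => ω i)

/-- The deviation date: the first time the quality of `σ` drops at least `m/2` below the
value of the current vertex (`∞` if this never happens). -/
noncomputable def Game.resetTime (G : Game V) (W : Set (ℕ → V)) (P : StratFam V)
    (σ : List V → V) (m : ℝ) (ω : ℕ → V) : ℕ∞ :=
  sInf ((fun n : ℕ => (n : ℕ∞)) ''
    {n | G.qual W P σ (prefixList ω n) ≤ G.val W P (ω n) - m / 2})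

/-- The date `t(v₀,…,vₙ)` of the latest deviation before date `n`, along the play `ω`. -/
noncomputable def Game.lastDevAux (G : Game V) (W : Set (ℕ → V)) (P : StratFam V)
    (σ : List V → V) (m : ℝ) (ω : ℕ → V) : ℕ → ℕ
  | 0 => 0
  | n + 1 =>
    let t := G.lastDevAux W P σ m ω n
    if G.val W P (ω (n + 1)) - m / 2 ≤ G.qual W P σ ((prefixList ω (n + 1)).drop t)
    then t else n + 1

/-- The date of the latest deviation, as a function of the finite play `h`. -/
noncomputable def Game.lastDev [Inhabited V] (G : Game V) (W : Set (ℕ → V)) (P : StratFam V)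
    (σ : List V → V) (m : ℝ) (h : List V) : ℕ :=
  G.lastDevAux W P σ m (fun i => h.getD i default) (h.length - 1)

/-- The reset strategy `σ'`: forget everything before the latest deviation and apply `σ`. -/
noncomputable def Game.resetStrat [Inhabited V] (G : Game V) (W : Set (ℕ → V))
    (P : StratFam V) (σ : List V → V) (m : ℝ) : List V → V :=
  fun h => σ (h.drop (G.lastDev W P σ m h))

/-- The σ-algebra generated by the coordinates `V₀, …, Vₙ`. -/
def hist (V : Type) [MeasurableSpace V] (n : ℕ) : MeasurableSpace (ℕ → V) :=
  MeasurableSpace.comap (fun ω (i : Fin (n + 1)) => ω i) inferInstance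

/-- The strategy `σ[h]` shifted by the finite play `h`:
`σ[h](w₀w₁⋯wₖ) = σ(v₀⋯vₙw₁⋯wₖ)` where `h = v₀⋯vₙ`. -/
def shiftStrat (s : List V → V) (h : List V) : List V → V := fun l => s (h ++ l.drop 1)

/-- The function `φ[h]` shifted by the finite play `h`:
`φ[h](w₀w₁w₂⋯) = φ(v₀⋯vₙw₁w₂⋯)` where `h = v₀⋯vₙ`. -/
def shiftFun {α : Type} (φ : (ℕ → V) → α) (h : List V) : (ℕ → V) → α :=
  fun q => φ (prepend h (fun n => q (n + 1)))

/-- A superfluous edge: a move of Max decreasing the value, or a move of min increasing it. -/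
def Game.Superfluous (G : Game V) (W : Set (ℕ → V)) (P : StratFam V) (v w : V) : Prop :=
  (v ∈ G.VMax ∧ G.val W P w < G.val W P v) ∨ (v ∈ G.Vmin ∧ G.val W P v < G.val W P w)

set_option linter.unusedSectionVars false
set_option linter.unusedVariables false
open Set
def shift (ω : ℕ → V) : ℕ → V := fun n => ω (n + 1)

lemma measurable_shift : Measurable (shift (V := V)) := by
  apply measurable_pi_iff.2
  intro i
  exact measurable_pi_apply _

lemma measurableSet_cyl (h : List V) : MeasurableSet (cyl h) := by
  have : cyl h = ⋂ i : Fin h.length, (fun ω : ℕ → V => ω i) ⁻¹' {h.get i} := by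
    ext ω; simp [cyl, Set.mem_iInter]
  rw [this]
  exact MeasurableSet.iInter fun i => (measurable_pi_apply _) (measurableSet_singleton _)

set_option linter.unusedSectionVars false

@[simp] lemma cyl_nil : cyl ([] : List V) = Set.univ := by
  ext ω; simp [cyl]

lemma cyl_singleton (x : V) : cyl [x] = {ω : ℕ → V | ω 0 = x} := by
  ext ω
  constructor
  · intro hω; exact hω ⟨0, by simp⟩
  · intro hω i
    rcases i with ⟨i, hi⟩
    simp only [List.length_singleton] at hi
    interval_cases i
    simpa using hω

lemma cyl_append (h : List V) (x : V) :
    cyl (h ++ [x]) = cyl h ∩ {ω : ℕ → V | ω h.length = x} := by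
  ext ω
  constructor
  · intro hω
    refine ⟨fun i => ?_, ?_⟩
    · have := hω ⟨i, by simp⟩
      have h2 := i.2
      simp only [List.get_eq_getElem] at this ⊢
      rwa [List.getElem_append_left i.2] at this
    · have := hω ⟨h.length, by simp⟩
      simpa using this
  · rintro ⟨h1, h2⟩ i
    rcases i with ⟨i, hi⟩
    simp only [List.length_append, List.length_cons, List.length_nil] at hi
    rcases Nat.lt_or_ge i h.length with hlt | hge
    · have := h1 ⟨i, hlt⟩
      simp only [List.get_eq_getElem] at this ⊢
      rwa [List.getElem_append_left hlt]
    · have hieq : i = h.length := by omega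
      subst hieq
      simp only [List.get_eq_getElem]
      rw [List.getElem_append_right (le_refl h.length)]
      simpa using h2

lemma cyl_cons (u : V) (l : List V) :
    cyl (u :: l) = {ω : ℕ → V | ω 0 = u} ∩ shift ⁻¹' cyl l := by
  ext ω
  constructor
  · intro hω
    refine ⟨hω ⟨0, by simp⟩, fun i => ?_⟩
    have := hω i.succ
    simpa [shift] using this
  · rintro ⟨h1, h2⟩ i
    rcases i with ⟨i, hi⟩
    cases i with
    | zero => simpa using h1
    | succ j =>
      have := h2 ⟨j, by simpa using hi⟩
      simpa [shift] using this

lemma cyl_ofFn {n : ℕ} (f : Fin n → V) :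
    cyl (List.ofFn f) = {ω : ℕ → V | ∀ i : Fin n, ω i = f i} := by
  ext ω
  constructor
  · intro hω i
    have := hω ⟨i, by simp [i.2]⟩
    simpa [List.get_ofFn] using this
  · intro hω i
    rcases i with ⟨i, hi⟩
    have hi' : i < n := by simpa using hi
    have := hω ⟨i, hi'⟩
    simp [List.get_ofFn]
    exact this

lemma measure_eq_sum_cyl (μ : Measure (ℕ → V)) (n : ℕ) (A : Set (ℕ → V))
    (hA : MeasurableSet A) :
    μ A = ∑ f : Fin (n + 1) → V, μ (A ∩ cyl (List.ofFn f)) := by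
  have hcov : A = ⋃ f : Fin (n + 1) → V, A ∩ cyl (List.ofFn f) := by
    ext ω
    simp only [Set.mem_iUnion, Set.mem_inter_iff]
    constructor
    · intro hω
      exact ⟨fun i => ω i, hω, by rw [cyl_ofFn]; exact fun i => rfl⟩
    · rintro ⟨f, hω, _⟩; exact hω
  have hdisj : Pairwise (Function.onFun Disjoint fun f : Fin (n + 1) → V => A ∩ cyl (List.ofFn f)) := by
    intro f g hfg
    simp only [Function.onFun, Set.disjoint_left]
    rintro ω ⟨-, h1⟩ ⟨-, h2⟩
    rw [cyl_ofFn] at h1 h2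
    exact hfg (funext fun i => (h1 i).symm.trans (h2 i))
  calc μ A = μ (⋃ f : Fin (n + 1) → V, A ∩ cyl (List.ofFn f)) := by rw [← hcov]
    _ = ∑' f : Fin (n + 1) → V, μ (A ∩ cyl (List.ofFn f)) :=
        measure_iUnion hdisj fun f => hA.inter (measurableSet_cyl _)
    _ = _ := tsum_fintype _

lemma measure_mul_cond (μ : Measure (ℕ → V)) [IsProbabilityMeasure μ]
    (s t : Set (ℕ → V)) (hs : MeasurableSet s) :
    μ (s ∩ t) = μ s * μ[|s] t := by
  by_cases h0 : μ s = 0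
  · rw [h0, zero_mul]
    exact le_antisymm (le_trans (measure_mono Set.inter_subset_left) h0.le) zero_le
  · rw [cond_apply hs, ← mul_assoc, ENNReal.mul_inv_cancel h0 (measure_ne_top μ s), one_mul]

lemma cond_eq_zero_of_one {μ : Measure (ℕ → V)} [IsProbabilityMeasure μ]
    {s t t' : Set (ℕ → V)} (hs : MeasurableSet s) (ht : MeasurableSet t)
    (h0 : μ s ≠ 0) (h1 : μ[|s] t = 1) (hdisj : t' ⊆ tᶜ) : μ[|s] t' = 0 := by
  have : IsProbabilityMeasure (μ[|s]) := cond_isProbabilityMeasure h0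
  have hc : μ[|s] tᶜ = 0 := by
    rw [prob_compl_eq_one_sub ht, h1, tsub_self]
  exact le_antisymm (le_trans (measure_mono hdisj) hc.le) zero_le
lemma generateFrom_cyl :
    (MeasurableSpace.pi : MeasurableSpace (ℕ → V)) =
      MeasurableSpace.generateFrom {s | ∃ h : List V, s = cyl h} := by
  apply le_antisymm
  · refine iSup_le fun i => ?_
    rw [MeasurableSpace.comap_le_iff_le_map]
    intro s _
    show MeasurableSet[MeasurableSpace.generateFrom {s : Set (ℕ → V) | ∃ h : List V, s = cyl h}]
      ((fun ω : ℕ → V => ω i) ⁻¹' s)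
    have : (fun ω : ℕ → V => ω i) ⁻¹' s =
        ⋃ (f : Fin (i + 1) → V) (_ : f ⟨i, Nat.lt_succ_self i⟩ ∈ s), cyl (List.ofFn f) := by
      ext ω
      simp only [Set.mem_preimage, Set.mem_iUnion, cyl_ofFn, Set.mem_setOf_eq]
      constructor
      · intro hω
        exact ⟨fun j => ω j, hω, fun j => rfl⟩
      · rintro ⟨f, hf, hω⟩
        rw [hω ⟨i, Nat.lt_succ_self i⟩]; exact hf
    rw [this]
    exact @MeasurableSet.iUnion _ _ _ _ _ fun f => @MeasurableSet.iUnion _ _ _ _ _ fun hf =>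
      MeasurableSpace.measurableSet_generateFrom ⟨List.ofFn f, rfl⟩
  · apply MeasurableSpace.generateFrom_le
    rintro s ⟨h, rfl⟩
    exact measurableSet_cyl h

lemma isPiSystem_cyl : IsPiSystem {s : Set (ℕ → V) | ∃ h : List V, s = cyl h} := by
  rintro s ⟨h₁, rfl⟩ t ⟨h₂, rfl⟩ hne
  have key : ∀ (a b : List V), a.length ≤ b.length → (cyl a ∩ cyl b).Nonempty →
      cyl a ∩ cyl b = cyl b := by
    intro a b hab ⟨ω₀, hω₁, hω₂⟩
    apply Set.inter_eq_self_of_subset_right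
    intro ω hω i
    have hib : (i : ℕ) < b.length := lt_of_lt_of_le i.2 hab
    have e1 := hω ⟨i, hib⟩
    have e2 := hω₂ ⟨i, hib⟩
    have e3 := hω₁ i
    simp only [List.get_eq_getElem] at *
    rw [e1, ← e2, e3]
  rcases le_total h₁.length h₂.length with hle | hle
  · rw [key h₁ h₂ hle hne]; exact ⟨h₂, rfl⟩
  · rw [Set.inter_comm] at hne ⊢
    rw [key h₂ h₁ hle hne]; exact ⟨h₁, rfl⟩

lemma measure_ext_cyl (μ ν : Measure (ℕ → V)) [IsProbabilityMeasure μ] [IsProbabilityMeasure ν]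
    (h : ∀ l : List V, μ (cyl l) = ν (cyl l)) : μ = ν := by
  refine ext_of_generate_finite _ generateFrom_cyl isPiSystem_cyl ?_ (by simp)
  rintro s ⟨l, rfl⟩
  exact h l

noncomputable def Game.step (G : Game V) (σ τ : List V → V) (h : List V) (u x : V) : ENNReal :=
  if u ∈ G.VMax then (if x = σ h then 1 else 0)
  else if u ∈ G.Vmin then (if x = τ h then 1 else 0)
  else ENNReal.ofReal (G.p u x)

variable {G : Game V} {σ τ : List V → V} {v : V} {μ : Measure (ℕ → V)}

lemma Game.IsInduced.cond_step (hμ : G.IsInduced σ τ v μ) {h : List V} {u : V}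
    (hu : h.getLast? = some u) (h0 : μ (cyl h) ≠ 0) (x : V) :
    μ[|cyl h] {ω | ω h.length = x} = G.step σ τ h u x := by
  haveI : IsProbabilityMeasure μ := hμ.1
  have h3 := hμ.2.2 h u hu h0
  have hmeas : ∀ y : V, MeasurableSet {ω : ℕ → V | ω h.length = y} := fun y =>
    (measurable_pi_apply _) (measurableSet_singleton _)
  rcases G.cover u with hM | hm | hR
  · rw [Game.step, if_pos hM]
    by_cases hx : x = σ h
    · subst hx; rw [if_pos rfl]; exact h3.1 hM
    · rw [if_neg hx]
      refine cond_eq_zero_of_one (measurableSet_cyl h) (hmeas (σ h)) h0 (h3.1 hM) ?_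
      intro ω hω hω'
      exact hx (hω.symm.trans hω')
  · have hM : u ∉ G.VMax := fun hM => Set.disjoint_left.mp G.disjMm hM hm
    rw [Game.step, if_neg hM, if_pos hm]
    by_cases hx : x = τ h
    · subst hx; rw [if_pos rfl]; exact h3.2.1 hm
    · rw [if_neg hx]
      refine cond_eq_zero_of_one (measurableSet_cyl h) (hmeas (τ h)) h0 (h3.2.1 hm) ?_
      intro ω hω hω'
      exact hx (hω.symm.trans hω')
  · have hM : u ∉ G.VMax := fun hM => Set.disjoint_left.mp G.disjMR hM hR
    have hm : u ∉ G.Vmin := fun hm => Set.disjoint_left.mp G.disjmR hm hR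
    rw [Game.step, if_neg hM, if_neg hm]
    exact h3.2.2 hR x

lemma Game.IsInduced.measure_append (hμ : G.IsInduced σ τ v μ) {h : List V} {u : V}
    (hu : h.getLast? = some u) (x : V) :
    μ (cyl (h ++ [x])) = μ (cyl h) * G.step σ τ h u x := by
  haveI : IsProbabilityMeasure μ := hμ.1
  by_cases h0 : μ (cyl h) = 0
  · rw [h0, zero_mul]
    refine le_antisymm (le_trans (measure_mono ?_) h0.le) zero_le
    rw [cyl_append]; exact Set.inter_subset_left
  · rw [cyl_append, measure_mul_cond μ _ _ (measurableSet_cyl h), hμ.cond_step hu h0 x]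

lemma Game.IsInduced.measure_singleton (hμ : G.IsInduced σ τ v μ) (x : V) :
    μ (cyl [x]) = if x = v then 1 else 0 := by
  haveI : IsProbabilityMeasure μ := hμ.1
  have hv := hμ.2.1
  by_cases hx : x = v
  · subst hx; rw [if_pos rfl, cyl_singleton]; exact hv
  · rw [if_neg hx, cyl_singleton]
    have hsub : {ω : ℕ → V | ω 0 = x} ⊆ {ω : ℕ → V | ω 0 = v}ᶜ := by
      intro ω hω hω'; exact hx (hω.symm.trans hω' |>.symm ▸ rfl)
    have hms : MeasurableSet {ω : ℕ → V | ω 0 = v} := by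
      have := (measurable_pi_apply (X := fun _ : ℕ => V) 0) (measurableSet_singleton v)
      exact this
    have : μ {ω : ℕ → V | ω 0 = v}ᶜ = 0 := by
      rw [prob_compl_eq_one_sub hms, hv, tsub_self]
    exact le_antisymm (le_trans (measure_mono hsub) this.le) zero_le

lemma Game.IsInduced.unique {μ₁ μ₂ : Measure (ℕ → V)} (h1 : G.IsInduced σ τ v μ₁)
    (h2 : G.IsInduced σ τ v μ₂) : μ₁ = μ₂ := by
  haveI : IsProbabilityMeasure μ₁ := h1.1
  haveI : IsProbabilityMeasure μ₂ := h2.1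
  apply measure_ext_cyl
  intro l
  induction l using List.reverseRecOn with
  | nil => simp
  | append_singleton l x ih =>
    cases l with
    | nil => simp only [List.nil_append]; rw [h1.measure_singleton, h2.measure_singleton]
    | cons a t =>
      have hne : (a :: t) ≠ [] := by simp
      have hu : (a :: t).getLast? = some ((a :: t).getLast hne) :=
        List.getLast?_eq_getLast hne
      rw [h1.measure_append hu, h2.measure_append hu, ih]

lemma Game.IsInduced.congr (hμ : G.IsInduced σ τ v μ) {σ' τ' : List V → V}
    (hs : ∀ h : List V, h ≠ [] → μ (cyl h) ≠ 0 → σ h = σ' h ∧ τ h = τ' h) :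
    G.IsInduced σ' τ' v μ := by
  refine ⟨hμ.1, hμ.2.1, fun h u hu h0 => ?_⟩
  have hne : h ≠ [] := by rintro rfl; simp at hu
  obtain ⟨e1, e2⟩ := hs h hne h0
  have h3 := hμ.2.2 h u hu h0
  exact ⟨fun hM => e1 ▸ h3.1 hM, fun hm => e2 ▸ h3.2.1 hm, h3.2.2⟩

lemma Game.IsInduced.finitePlay (hμ : G.IsInduced σ τ v μ) (hσ : G.IsMaxStrategy σ)
    (hτ : G.IsMinStrategy τ) :
    ∀ l : List V, μ (cyl l) ≠ 0 → l ≠ [] → G.FinitePlay l ∧ l.head? = some v := by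
  intro l
  induction l using List.reverseRecOn with
  | nil => exact fun _ h => absurd rfl h
  | append_singleton l x ih =>
    intro h0 _
    cases l with
    | nil =>
      have hx : x = v := by
        by_contra hxv
        rw [List.nil_append, hμ.measure_singleton, if_neg hxv] at h0
        exact h0 rfl
      subst hx
      exact ⟨⟨by simp, List.isChain_singleton x⟩, by simp⟩
    | cons a t =>
      have hsub : cyl ((a :: t) ++ [x]) ⊆ cyl (a :: t) := by
        rw [cyl_append]; exact Set.inter_subset_left
      have h0' : μ (cyl (a :: t)) ≠ 0 := fun hz =>
        h0 (le_antisymm (le_trans (measure_mono hsub) hz.le) zero_le)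
      obtain ⟨hFP, hhead⟩ := ih h0' (by simp)
      have hne : (a :: t) ≠ [] := by simp
      set u := (a :: t).getLast hne with hudef
      have hu : (a :: t).getLast? = some u := List.getLast?_eq_getLast hne
      have hstep : G.step σ τ (a :: t) u x ≠ 0 := by
        intro hz
        apply h0
        rw [hμ.measure_append hu, hz, mul_zero]
      have hedge : G.E u x := by
        rcases G.cover u with hM | hm | hR
        · rw [Game.step, if_pos hM] at hstep
          have hx : x = σ (a :: t) := by
            by_contra hne'; rw [if_neg hne'] at hstep; exact hstep rfl
          subst hx
          exact hσ _ hFP u hu hM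
        · have hM : u ∉ G.VMax := fun hM => Set.disjoint_left.mp G.disjMm hM hm
          rw [Game.step, if_neg hM, if_pos hm] at hstep
          have hx : x = τ (a :: t) := by
            by_contra hne'; rw [if_neg hne'] at hstep; exact hstep rfl
          subst hx
          exact hτ _ hFP u hu hm
        · have hM : u ∉ G.VMax := fun hM => Set.disjoint_left.mp G.disjMR hM hR
          have hm : u ∉ G.Vmin := fun hm => Set.disjoint_left.mp G.disjmR hm hR
          rw [Game.step, if_neg hM, if_neg hm] at hstep
          refine (G.p_pos_iff u hR x).1 (lt_of_not_ge fun hle => hstep ?_)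
          exact ENNReal.ofReal_eq_zero.2 hle
      constructor
      · refine ⟨by simp, ?_⟩
        show List.IsChain G.E ((a :: t) ++ [x])
        rw [List.isChain_append]
        refine ⟨hFP.2, List.isChain_singleton x, fun y hy z hz => ?_⟩
        simp only [List.head?_cons, Option.mem_def, Option.some.injEq] at hz
        rw [Option.mem_def, hu, Option.some.injEq] at hy
        rw [← hy, ← hz]
        exact hedge
      · simpa using hhead

lemma measurableSet_eval (n : ℕ) (y : V) : MeasurableSet {ω : ℕ → V | ω n = y} := by
  have := (measurable_pi_apply (X := fun _ : ℕ => V) n) (measurableSet_singleton y)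
  exact this

lemma mem_cyl_pair {u w : V} {ω : ℕ → V} (hω : ω ∈ cyl [u, w]) : ω 0 = u ∧ ω 1 = w :=
  ⟨hω ⟨0, by simp⟩, hω ⟨1, by simp⟩⟩

lemma cyl_pair_inter (u w : V) (t : List V) :
    cyl [u, w] ∩ shift ⁻¹' cyl (w :: t) = cyl (u :: w :: t) := by
  have h1 : cyl [u, w] = {ω : ℕ → V | ω 0 = u} ∩ shift ⁻¹' cyl [w] := cyl_cons u ([w])
  have h2 : cyl (u :: w :: t) = {ω : ℕ → V | ω 0 = u} ∩ shift ⁻¹' cyl (w :: t) :=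
    cyl_cons u (w :: t)
  have hsub : cyl (w :: t) ⊆ cyl [w] := by
    rw [cyl_cons, cyl_singleton]
    exact Set.inter_subset_left
  rw [h1, h2, Set.inter_assoc, ← Set.preimage_inter,
    Set.inter_eq_self_of_subset_right hsub]

variable {G : Game V} {σ τ : List V → V} {v : V} {μ : Measure (ℕ → V)}

lemma Game.IsInduced.shifted {u : V} (hμ : G.IsInduced σ τ u μ) (w : V)
    (hC : μ (cyl [u, w]) ≠ 0) :
    G.IsInduced (shiftStrat σ ([u, w])) (shiftStrat τ ([u, w])) w
      (Measure.map shift (ProbabilityTheory.cond μ (cyl [u, w]))) := by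
  haveI : IsProbabilityMeasure μ := hμ.1
  haveI hPc : IsProbabilityMeasure (ProbabilityTheory.cond μ (cyl [u, w])) := cond_isProbabilityMeasure hC
  set C : Set (ℕ → V) := cyl [u, w] with hCdef
  set ν : Measure (ℕ → V) := Measure.map shift (ProbabilityTheory.cond μ C) with hνdef
  haveI hPν : IsProbabilityMeasure ν := Measure.isProbabilityMeasure_map
    measurable_shift.aemeasurable
  have hν : ∀ s : Set (ℕ → V), MeasurableSet s → ν s = (μ C)⁻¹ * μ (C ∩ shift ⁻¹' s) := by
    intro s hs
    rw [hνdef, Measure.map_apply measurable_shift hs, cond_apply (measurableSet_cyl _)]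
  refine ⟨hPν, ?_, ?_⟩
  · have hsub : C ⊆ shift ⁻¹' {ω : ℕ → V | ω 0 = w} := fun ω hω => (mem_cyl_pair hω).2
    rw [hν _ (measurableSet_eval 0 w), Set.inter_eq_self_of_subset_left hsub]
    exact ENNReal.inv_mul_cancel hC (measure_ne_top μ C)
  · intro h' u' hu' hν'
    cases h' with
    | nil => simp at hu'
    | cons x t =>
      have hx : x = w := by
        by_contra hxw
        apply hν'
        rw [hν _ (measurableSet_cyl _)]
        have : C ∩ shift ⁻¹' cyl (x :: t) = ∅ := by
          apply Set.eq_empty_iff_forall_notMem.2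
          rintro ω ⟨hω1, hω2⟩
          have e1 : ω 1 = w := (mem_cyl_pair hω1).2
          have e2 : shift ω 0 = x := hω2 ⟨0, by simp⟩
          exact hxw ((e2.symm.trans (e1 : shift ω 0 = w)))
        rw [this]
        simp
      subst hx
      set A : Set (ℕ → V) := cyl (u :: x :: t) with hAdef
      have hAnz : μ A ≠ 0 := by
        intro hz
        apply hν'
        rw [hν _ (measurableSet_cyl _), cyl_pair_inter, ← hAdef, hz, mul_zero]
      have hcond : ∀ s : Set (ℕ → V), MeasurableSet s →
          ProbabilityTheory.cond ν (cyl (x :: t)) s = ProbabilityTheory.cond μ A (shift ⁻¹' s) := by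
        intro s hs
        rw [cond_apply (measurableSet_cyl _), cond_apply (measurableSet_cyl _)]
        have e1 : ν (cyl (x :: t)) = (μ C)⁻¹ * μ A := by
          rw [hν _ (measurableSet_cyl _), cyl_pair_inter]
        have e2 : ν (cyl (x :: t) ∩ s) = (μ C)⁻¹ * μ (A ∩ shift ⁻¹' s) := by
          rw [hν _ ((measurableSet_cyl _).inter hs), Set.preimage_inter, ← Set.inter_assoc,
            cyl_pair_inter]
        rw [e1, e2, ENNReal.mul_inv (Or.inl (ENNReal.inv_ne_zero.2 (measure_ne_top μ C)))
          (Or.inl (ENNReal.inv_ne_top.2 hC)), inv_inv]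
        calc μ C * (μ A)⁻¹ * ((μ C)⁻¹ * μ (A ∩ shift ⁻¹' s))
            = (μ C * (μ C)⁻¹) * ((μ A)⁻¹ * μ (A ∩ shift ⁻¹' s)) := by ring
          _ = (μ A)⁻¹ * μ (A ∩ shift ⁻¹' s) := by
              rw [ENNReal.mul_inv_cancel hC (measure_ne_top μ C), one_mul]
      have hgl : (u :: x :: t).getLast? = some u' := by
        rw [List.getLast?_cons_cons]; exact hu'
      have hmain := hμ.2.2 (u :: x :: t) u' hgl hAnz
      refine ⟨fun hM => ?_, fun hm => ?_, fun hR y => ?_⟩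
      · show ProbabilityTheory.cond ν (cyl (x :: t)) {ω | ω (x :: t).length = σ (u :: x :: t)} = 1
        rw [hcond _ (measurableSet_eval _ _)]
        exact hmain.1 hM
      · show ProbabilityTheory.cond ν (cyl (x :: t)) {ω | ω (x :: t).length = τ (u :: x :: t)} = 1
        rw [hcond _ (measurableSet_eval _ _)]
        exact hmain.2.1 hm
      · rw [hcond _ (measurableSet_eval _ _)]
        exact hmain.2.2 hR y

noncomputable def Game.dflt (G : Game V) (v : V) : V := (G.succ_exists v).choose

lemma Game.dflt_edge (G : Game V) (v : V) : G.E v (G.dflt v) := (G.succ_exists v).choose_spec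

noncomputable def Game.dfltStrat (G : Game V) [Nonempty V] : List V → V :=
  fun h => G.dflt (h.getLastD (Classical.arbitrary V))

lemma getLastD_of_getLast? {l : List V} {u a : V} (h : l.getLast? = some u) :
    l.getLastD a = u := by
  rw [List.getLastD_eq_getLast?, h]; rfl

lemma Game.dfltStrat_max (G : Game V) [Nonempty V] : G.IsMaxStrategy G.dfltStrat := by
  intro h hFP u hu _
  rw [Game.dfltStrat, getLastD_of_getLast? hu]
  exact G.dflt_edge u

lemma Game.dfltStrat_min (G : Game V) [Nonempty V] : G.IsMinStrategy G.dfltStrat := by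
  intro h hFP u hu _
  rw [Game.dfltStrat, getLastD_of_getLast? hu]
  exact G.dflt_edge u

lemma Game.nonempty_maxStrategy (G : Game V) [Nonempty V] :
    Nonempty {σ : List V → V // G.IsMaxStrategy σ} := ⟨G.dfltStrat, G.dfltStrat_max⟩

lemma Game.nonempty_minStrategy (G : Game V) [Nonempty V] :
    Nonempty {τ : List V → V // G.IsMinStrategy τ} := ⟨G.dfltStrat, G.dfltStrat_min⟩

/-- Patch a partial strategy into a valid one, keeping its values on finite plays with
head `w`. -/
noncomputable def Game.patch (G : Game V) [Nonempty V] (w : V) (s : List V → V) :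
    List V → V :=
  fun l => if G.FinitePlay l ∧ l.head? = some w then s l
    else G.dflt (l.getLastD (Classical.arbitrary V))

variable {G : Game V} {σ τ : List V → V} {v : V} {μ : Measure (ℕ → V)}

lemma Game.patch_eq [Nonempty V] {w : V} {s : List V → V} {l : List V}
    (hl : G.FinitePlay l) (hh : l.head? = some w) : G.patch w s l = s l := if_pos ⟨hl, hh⟩

lemma Game.patch_max [Nonempty V] {w : V} {s : List V → V}
    (hs : ∀ l, G.FinitePlay l → l.head? = some w → ∀ x, l.getLast? = some x →
      x ∈ G.VMax → G.E x (s l)) : G.IsMaxStrategy (G.patch w s) := by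
  intro h hFP u hu hM
  rw [Game.patch]
  by_cases hcond : G.FinitePlay h ∧ h.head? = some w
  · rw [if_pos hcond]; exact hs h hcond.1 hcond.2 u hu hM
  · rw [if_neg hcond, getLastD_of_getLast? hu]; exact G.dflt_edge u

lemma Game.patch_min [Nonempty V] {w : V} {s : List V → V}
    (hs : ∀ l, G.FinitePlay l → l.head? = some w → ∀ x, l.getLast? = some x →
      x ∈ G.Vmin → G.E x (s l)) : G.IsMinStrategy (G.patch w s) := by
  intro h hFP u hu hm
  rw [Game.patch]
  by_cases hcond : G.FinitePlay h ∧ h.head? = some w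
  · rw [if_pos hcond]; exact hs h hcond.1 hcond.2 u hu hm
  · rw [if_neg hcond, getLastD_of_getLast? hu]; exact G.dflt_edge u

lemma shiftStrat_pair_eq {s : List V → V} (u w : V) {l : List V} (hh : l.head? = some w) :
    shiftStrat s ([u, w]) l = s (u :: l) := by
  cases l with
  | nil => simp at hh
  | cons a t =>
    simp only [List.head?_cons, Option.some.injEq] at hh
    subst hh
    rfl

lemma finitePlay_cons_of_head {u w : V} {l : List V} (hFP : G.FinitePlay l)
    (hh : l.head? = some w) (huw : G.E u w) : G.FinitePlay (u :: l) := by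
  refine ⟨by simp, ?_⟩
  show List.IsChain G.E (u :: l)
  rw [List.isChain_cons]
  refine ⟨fun y hy => ?_, hFP.2⟩
  rw [Option.mem_def, hh, Option.some.injEq] at hy
  rw [← hy]; exact huw

lemma getLast?_cons_of_ne_nil {u : V} {l : List V} (hne : l ≠ []) :
    (u :: l).getLast? = l.getLast? := by
  cases l with
  | nil => exact absurd rfl hne
  | cons a t => exact List.getLast?_cons_cons

lemma shiftStrat_spec_max (hσ : G.IsMaxStrategy σ) {u w : V} (huw : G.E u w) :
    ∀ l, G.FinitePlay l → l.head? = some w → ∀ x, l.getLast? = some x →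
      x ∈ G.VMax → G.E x (shiftStrat σ ([u, w]) l) := by
  intro l hFP hh x hx hM
  rw [shiftStrat_pair_eq u w hh]
  refine hσ (u :: l) (finitePlay_cons_of_head hFP hh huw) x ?_ hM
  rw [getLast?_cons_of_ne_nil hFP.1]; exact hx

lemma shiftStrat_spec_min (hτ : G.IsMinStrategy τ) {u w : V} (huw : G.E u w) :
    ∀ l, G.FinitePlay l → l.head? = some w → ∀ x, l.getLast? = some x →
      x ∈ G.Vmin → G.E x (shiftStrat τ ([u, w]) l) := by
  intro l hFP hh x hx hm
  rw [shiftStrat_pair_eq u w hh]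
  refine hτ (u :: l) (finitePlay_cons_of_head hFP hh huw) x ?_ hm
  rw [getLast?_cons_of_ne_nil hFP.1]; exact hx

/-- Two pairs of valid strategies agreeing on finite plays with head `w` induce the same
measure from `w`. -/
lemma induced_eq_of_agree {P : StratFam V} (hP : G.IsInducedFam P)
    {σ₁ τ₁ σ₂ τ₂ : List V → V} (h1σ : G.IsMaxStrategy σ₁) (h1τ : G.IsMinStrategy τ₁)
    (w : V)
    (hagree : ∀ l, G.FinitePlay l → l.head? = some w → σ₁ l = σ₂ l ∧ τ₁ l = τ₂ l) :
    P σ₁ τ₁ w = P σ₂ τ₂ w := by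
  have hμ := hP σ₁ τ₁ w
  have h2 : G.IsInduced σ₂ τ₂ w (P σ₁ τ₁ w) := by
    refine hμ.congr fun h hne h0 => ?_
    obtain ⟨hFP, hh⟩ := hμ.finitePlay h1σ h1τ h h0 hne
    exact hagree h hFP hh
  exact h2.unique (hP σ₂ τ₂ w)

lemma measure_eq_sum_eval (μ : Measure (ℕ → V)) (n : ℕ) (A : Set (ℕ → V))
    (hA : MeasurableSet A) : μ A = ∑ x : V, μ (A ∩ {ω | ω n = x}) := by
  have hcov : A = ⋃ x : V, A ∩ {ω : ℕ → V | ω n = x} := by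
    ext ω
    simp only [Set.mem_iUnion, Set.mem_inter_iff, Set.mem_setOf_eq]
    exact ⟨fun hω => ⟨ω n, hω, rfl⟩, fun ⟨x, hω, _⟩ => hω⟩
  have hdisj : Pairwise (Function.onFun Disjoint fun x : V => A ∩ {ω : ℕ → V | ω n = x}) := by
    intro x y hxy
    simp only [Function.onFun, Set.disjoint_left]
    rintro ω ⟨-, h1⟩ ⟨-, h2⟩
    exact hxy (h1.symm.trans h2)
  calc μ A = μ (⋃ x : V, A ∩ {ω : ℕ → V | ω n = x}) := by rw [← hcov]
    _ = ∑' x : V, μ (A ∩ {ω : ℕ → V | ω n = x}) :=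
        measure_iUnion hdisj fun x => hA.inter (measurableSet_eval n x)
    _ = _ := tsum_fintype _

lemma measure_inter_of_conull {μ : Measure (ℕ → V)} {A Z : Set (ℕ → V)}
    (h : μ Zᶜ = 0) : μ (A ∩ Z) = μ A := by
  apply le_antisymm (measure_mono Set.inter_subset_left)
  calc μ A ≤ μ ((A ∩ Z) ∪ Zᶜ) := by
        refine measure_mono fun ω hω => ?_
        by_cases hz : ω ∈ Z
        · exact Or.inl ⟨hω, hz⟩
        · exact Or.inr hz
    _ ≤ μ (A ∩ Z) + μ Zᶜ := measure_union_le _ _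
    _ = μ (A ∩ Z) := by rw [h, add_zero]

lemma cyl_pair_eq (u w : V) :
    cyl [u, w] = {ω : ℕ → V | ω 1 = w} ∩ {ω : ℕ → V | ω 0 = u} := by
  ext ω
  constructor
  · intro hω
    exact ⟨(mem_cyl_pair hω).2, (mem_cyl_pair hω).1⟩
  · rintro ⟨h1, h0⟩ i
    rcases i with ⟨i, hi⟩
    simp only [List.length_cons, List.length_nil] at hi
    interval_cases i
    · exact h0
    · exact h1

variable {G : Game V} {σ τ : List V → V} {v : V} {W : Set (ℕ → V)} {P : StratFam V}

lemma Game.IsInduced.measure_pair {u : V} {μ : Measure (ℕ → V)}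
    (hμ : G.IsInduced σ τ u μ) (hu : u ∈ G.VR) (w : V) :
    μ (cyl [u, w]) = ENNReal.ofReal (G.p u w) := by
  have happ := hμ.measure_append (h := [u]) (u := u) (by simp) w
  have heq : ([u] ++ [w] : List V) = [u, w] := rfl
  rw [heq] at happ
  rw [happ, hμ.measure_singleton, if_pos rfl, one_mul, Game.step,
    if_neg (fun hM => Set.disjoint_left.mp G.disjMR hM hu),
    if_neg (fun hm => Set.disjoint_left.mp G.disjmR hm hu)]

/-- The conditional measure given the first two vertices, shifted, and with strategies
patched, is the induced measure from the second vertex. -/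
lemma Game.IsInduced.cond_eq_induced [Nonempty V] {u w : V} {μ : Measure (ℕ → V)}
    (hμ : G.IsInduced σ τ u μ) (hP : G.IsInducedFam P) (hμP : μ = P σ τ u)
    (hσ : G.IsMaxStrategy σ) (hτ : G.IsMinStrategy τ) (huw : G.E u w)
    (hC : μ (cyl [u, w]) ≠ 0) :
    Measure.map shift (ProbabilityTheory.cond μ (cyl [u, w])) =
      P (G.patch w (shiftStrat σ ([u, w]))) (G.patch w (shiftStrat τ ([u, w]))) w := by
  haveI : IsProbabilityMeasure μ := hμ.1
  have hind := hμ.shifted w hC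
  set ν := Measure.map shift (ProbabilityTheory.cond μ (cyl [u, w])) with hνdef
  have hν : ∀ s : Set (ℕ → V), MeasurableSet s → ν s = (μ (cyl [u, w]))⁻¹ *
      μ (cyl [u, w] ∩ shift ⁻¹' s) := by
    intro s hs
    rw [hνdef, Measure.map_apply measurable_shift hs, cond_apply (measurableSet_cyl _)]
  have hpatch : G.IsInduced (G.patch w (shiftStrat σ ([u, w])))
      (G.patch w (shiftStrat τ ([u, w]))) w ν := by
    refine hind.congr fun h hne h0 => ?_
    -- first, the head of h must be w
    obtain ⟨x, t, rfl⟩ : ∃ x t, h = x :: t := by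
      cases h with
      | nil => exact absurd rfl hne
      | cons x t => exact ⟨x, t, rfl⟩
    have hx : x = w := by
      by_contra hxw
      apply h0
      have hz := hind.measure_singleton x
      rw [if_neg hxw] at hz
      refine le_antisymm (le_trans (measure_mono ?_) hz.le) zero_le
      rw [cyl_cons, cyl_singleton]
      exact Set.inter_subset_left
    subst hx
    have hmu : μ (cyl (u :: x :: t)) ≠ 0 := by
      intro hz
      apply h0
      rw [hν _ (measurableSet_cyl _), cyl_pair_inter, hz, mul_zero]
    have hFPc : G.FinitePlay (u :: x :: t) :=
      (hμ.finitePlay hσ hτ _ hmu (by simp)).1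
    have hFP : G.FinitePlay (x :: t) := ⟨by simp, hFPc.2.tail⟩
    have hhead : (x :: t).head? = some x := rfl
    exact ⟨(G.patch_eq hFP hhead).symm, (G.patch_eq hFP hhead).symm⟩
  exact hpatch.unique (hP _ _ w)

lemma Game.decomp [Nonempty V] (hW : MeasurableSet W) (hTail : IsTail W)
    (hP : G.IsInducedFam P) {u : V} (hu : u ∈ G.VR)
    (hσ : G.IsMaxStrategy σ) (hτ : G.IsMinStrategy τ) :
    (P σ τ u W).toReal = ∑ w : V, G.p u w *
      (P (G.patch w (shiftStrat σ ([u, w]))) (G.patch w (shiftStrat τ ([u, w]))) w W).toReal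
    := by
  set μ := P σ τ u with hμdef
  have hμ : G.IsInduced σ τ u μ := hP σ τ u
  haveI : IsProbabilityMeasure μ := hμ.1
  -- ENNReal-level identity
  have main : ∀ w : V, μ (W ∩ {ω | ω 1 = w}) = ENNReal.ofReal (G.p u w) *
      P (G.patch w (shiftStrat σ ([u, w]))) (G.patch w (shiftStrat τ ([u, w]))) w W := by
    intro w
    have hZ : μ {ω : ℕ → V | ω 0 = u}ᶜ = 0 := by
      rw [prob_compl_eq_one_sub (measurableSet_eval 0 u)]
      have := hμ.2.1
      rw [this, tsub_self]
    have e0 : μ (W ∩ {ω : ℕ → V | ω 1 = w}) = μ (W ∩ cyl [u, w]) := by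
      rw [cyl_pair_eq, ← Set.inter_assoc]
      exact (measure_inter_of_conull hZ).symm
    have e1 : μ (W ∩ cyl [u, w]) = μ (cyl [u, w]) *
        (ProbabilityTheory.cond μ (cyl [u, w])) W := by
      rw [Set.inter_comm]
      exact measure_mul_cond μ _ _ (measurableSet_cyl _)
    by_cases hpw : μ (cyl [u, w]) = 0
    · have hpval := hμ.measure_pair hu w
      have hz : ENNReal.ofReal (G.p u w) = 0 := by rw [← hpval]; exact hpw
      rw [e0, e1, hpw, zero_mul, hz, zero_mul]
    · have hpval : μ (cyl [u, w]) = ENNReal.ofReal (G.p u w) := hμ.measure_pair hu w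
      have hedge : G.E u w := by
        refine (G.p_pos_iff u hu w).1 ?_
        rcases lt_or_ge 0 (G.p u w) with h | h
        · exact h
        · exact absurd (by rw [hpval]; exact ENNReal.ofReal_eq_zero.2 h) hpw
      -- identify the conditional measure with the induced one
      have hcond : (ProbabilityTheory.cond μ (cyl [u, w])) W =
          P (G.patch w (shiftStrat σ ([u, w]))) (G.patch w (shiftStrat τ ([u, w]))) w W := by
        have hmap := hμ.cond_eq_induced hP hμdef hσ hτ hedge hpw
        rw [← hmap, Measure.map_apply measurable_shift hW]
        -- cond μ C (shift ⁻¹' W) = cond μ C W by tailness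
        rw [cond_apply (measurableSet_cyl _), cond_apply (measurableSet_cyl _)]
        congr 1
        apply congrArg
        ext ω
        simp only [Set.mem_inter_iff, Set.mem_preimage]
        constructor
        · rintro ⟨hω1, hω2⟩
          refine ⟨hω1, ?_⟩
          have hpre : prepend [u] (shift ω) = ω := by
            funext n
            cases n with
            | zero =>
              simp only [prepend, List.length_cons, List.length_nil]
              rw [dif_pos (by norm_num)]
              exact ((mem_cyl_pair hω1).1).symm
            | succ m =>
              simp only [prepend, List.length_cons, List.length_nil]
              rw [dif_neg (by omega)]
              rfl
          apply (hTail [u] (shift ω)).2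
          rw [hpre]
          exact hω2
        · rintro ⟨hω1, hω2⟩
          refine ⟨hω1, ?_⟩
          have hpre : prepend [u] (shift ω) = ω := by
            funext n
            cases n with
            | zero =>
              simp only [prepend, List.length_cons, List.length_nil]
              rw [dif_pos (by norm_num)]
              exact ((mem_cyl_pair hω1).1).symm
            | succ m =>
              simp only [prepend, List.length_cons, List.length_nil]
              rw [dif_neg (by omega)]
              rfl
          rw [← hpre]
          exact (hTail [u] (shift ω)).1 hω2
      rw [e0, e1, hpval, hcond]
  -- sum up
  have hsum : μ W = ∑ w : V, ENNReal.ofReal (G.p u w) *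
      P (G.patch w (shiftStrat σ ([u, w]))) (G.patch w (shiftStrat τ ([u, w]))) w W := by
    rw [measure_eq_sum_eval μ 1 W hW]
    exact Finset.sum_congr rfl fun w _ => main w
  have hfin : ∀ w : V, ENNReal.ofReal (G.p u w) *
      P (G.patch w (shiftStrat σ ([u, w]))) (G.patch w (shiftStrat τ ([u, w]))) w W ≠ ⊤ := by
    intro w
    haveI : IsProbabilityMeasure
        (P (G.patch w (shiftStrat σ ([u, w]))) (G.patch w (shiftStrat τ ([u, w]))) w) :=
      (hP _ _ w).1
    exact ENNReal.mul_ne_top ENNReal.ofReal_ne_top (measure_ne_top _ _)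
  rw [hsum, ENNReal.toReal_sum fun w _ => hfin w]
  refine Finset.sum_congr rfl fun w _ => ?_
  haveI : IsProbabilityMeasure
      (P (G.patch w (shiftStrat σ ([u, w]))) (G.patch w (shiftStrat τ ([u, w]))) w) :=
    (hP _ _ w).1
  rw [ENNReal.toReal_mul, ENNReal.toReal_ofReal]
  exact G.p_nonneg u hu w

/-- Combine a family of strategies, one per successor of `u`, into a single strategy. -/
noncomputable def Game.comb (G : Game V) [Nonempty V] (u : V) (s : V → List V → V) :
    List V → V
  | x :: w :: t => if x = u then s w (w :: t)
      else G.dflt ((x :: w :: t).getLastD (Classical.arbitrary V))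
  | h => G.dflt (h.getLastD (Classical.arbitrary V))

lemma Game.comb_max [Nonempty V] {G : Game V} {u : V} {s : V → List V → V}
    (hs : ∀ w, G.IsMaxStrategy (s w)) : G.IsMaxStrategy (G.comb u s) := by
  intro h hFP x hx hM
  match h with
  | [] => exact absurd rfl hFP.1
  | [a] =>
    show G.E x (G.dflt ([a].getLastD _))
    rw [getLastD_of_getLast? hx]
    exact G.dflt_edge x
  | a :: b :: t =>
    show G.E x (if a = u then s b (b :: t) else G.dflt ((a :: b :: t).getLastD _))
    by_cases hau : a = u
    · rw [if_pos hau]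
      refine hs b (b :: t) ⟨by simp, hFP.2.tail⟩ x ?_ hM
      rw [← List.getLast?_cons_cons (a := a)]
      exact hx
    · rw [if_neg hau, getLastD_of_getLast? hx]
      exact G.dflt_edge x

lemma Game.comb_min [Nonempty V] {G : Game V} {u : V} {s : V → List V → V}
    (hs : ∀ w, G.IsMinStrategy (s w)) : G.IsMinStrategy (G.comb u s) := by
  intro h hFP x hx hm
  match h with
  | [] => exact absurd rfl hFP.1
  | [a] =>
    show G.E x (G.dflt ([a].getLastD _))
    rw [getLastD_of_getLast? hx]
    exact G.dflt_edge x
  | a :: b :: t =>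
    show G.E x (if a = u then s b (b :: t) else G.dflt ((a :: b :: t).getLastD _))
    by_cases hau : a = u
    · rw [if_pos hau]
      refine hs b (b :: t) ⟨by simp, hFP.2.tail⟩ x ?_ hm
      rw [← List.getLast?_cons_cons (a := a)]
      exact hx
    · rw [if_neg hau, getLastD_of_getLast? hx]
      exact G.dflt_edge x

lemma Game.comb_agree [Nonempty V] {G : Game V} {u w : V} {s : V → List V → V}
    {l : List V} (hh : l.head? = some w) :
    shiftStrat (G.comb u s) ([u, w]) l = s w l := by
  obtain ⟨t, rfl⟩ : ∃ t, l = w :: t := by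
    cases l with
    | nil => simp at hh
    | cons a t => simp only [List.head?_cons, Option.some.injEq] at hh; exact ⟨t, by rw [hh]⟩
  rw [shiftStrat_pair_eq u w (l := w :: t) rfl]
  show (if u = u then s w (w :: t) else _) = s w (w :: t)
  rw [if_pos rfl]

section Val

variable {G : Game V} {W : Set (ℕ → V)} {P : StratFam V}

lemma prob_toReal_nonneg (σ τ : List V → V) (v : V) : 0 ≤ (P σ τ v W).toReal :=
  ENNReal.toReal_nonneg

lemma prob_toReal_le_one (hP : G.IsInducedFam P) (σ τ : List V → V) (v : V) :
    (P σ τ v W).toReal ≤ 1 := by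
  haveI : IsProbabilityMeasure (P σ τ v) := (hP σ τ v).1
  calc (P σ τ v W).toReal ≤ (1 : ENNReal).toReal :=
        ENNReal.toReal_mono ENNReal.one_ne_top prob_le_one
    _ = 1 := by simp

/-- inner infimum in the definition of the value -/
noncomputable def Game.infVal (G : Game V) (W : Set (ℕ → V)) (P : StratFam V)
    (σ : List V → V) (v : V) : ℝ :=
  ⨅ τ : {τ // G.IsMinStrategy τ}, (P σ τ.1 v W).toReal

lemma val_eq_iSup (G : Game V) (W : Set (ℕ → V)) (P : StratFam V) (v : V) :
    G.val W P v = ⨆ σ : {σ // G.IsMaxStrategy σ}, G.infVal W P σ.1 v := rfl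

lemma infVal_nonneg (σ : List V → V) (v : V) : 0 ≤ G.infVal W P σ v :=
  Real.iInf_nonneg fun τ => ENNReal.toReal_nonneg

lemma bddBelow_infVal (σ : List V → V) (v : V) :
    BddBelow (Set.range fun τ : {τ // G.IsMinStrategy τ} => (P σ τ.1 v W).toReal) := by
  refine ⟨0, ?_⟩
  rintro x ⟨τ, rfl⟩
  exact ENNReal.toReal_nonneg

lemma infVal_le_one [Nonempty V] (hP : G.IsInducedFam P) (σ : List V → V) (v : V) :
    G.infVal W P σ v ≤ 1 := by
  haveI := G.nonempty_minStrategy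
  exact ciInf_le_of_le (bddBelow_infVal σ v) (Classical.arbitrary _)
    (prob_toReal_le_one hP _ _ _)

lemma infVal_le [Nonempty V] {σ τ : List V → V} (hτ : G.IsMinStrategy τ) (v : V) :
    G.infVal W P σ v ≤ (P σ τ v W).toReal :=
  ciInf_le_of_le (bddBelow_infVal σ v) ⟨τ, hτ⟩ le_rfl

lemma bddAbove_infVal [Nonempty V] (hP : G.IsInducedFam P) (v : V) :
    BddAbove (Set.range fun σ : {σ // G.IsMaxStrategy σ} => G.infVal W P σ.1 v) := by
  refine ⟨1, ?_⟩
  rintro x ⟨σ, rfl⟩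
  exact infVal_le_one hP σ.1 v

lemma infVal_le_val [Nonempty V] (hP : G.IsInducedFam P) {σ : List V → V}
    (hσ : G.IsMaxStrategy σ) (v : V) : G.infVal W P σ v ≤ G.val W P v :=
  le_ciSup_of_le (bddAbove_infVal hP v) ⟨σ, hσ⟩ le_rfl

lemma val_nonneg [Nonempty V] (hP : G.IsInducedFam P) (v : V) : 0 ≤ G.val W P v := by
  haveI := G.nonempty_maxStrategy
  exact le_trans (infVal_nonneg (G := G) (G.dfltStrat) v)
    (infVal_le_val hP G.dfltStrat_max v)

lemma val_le_one [Nonempty V] (hP : G.IsInducedFam P) (v : V) : G.val W P v ≤ 1 := by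
  haveI := G.nonempty_maxStrategy
  exact ciSup_le fun σ => infVal_le_one hP σ.1 v

/-- Harmonicity of the value at random vertices. -/
lemma Game.val_harmonic [Nonempty V] (hW : MeasurableSet W) (hTail : IsTail W)
    (hP : G.IsInducedFam P) {u : V} (hu : u ∈ G.VR) :
    G.val W P u = ∑ w : V, G.p u w * G.val W P w := by
  haveI := G.nonempty_maxStrategy
  haveI := G.nonempty_minStrategy
  have edge_of_pos : ∀ w : V, 0 < G.p u w → G.E u w := fun w h => (G.p_pos_iff u hu w).1 h
  apply le_antisymm
  · -- val u ≤ ∑ p val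
    rw [val_eq_iSup]
    apply ciSup_le
    rintro ⟨σ0, hσ0⟩
    apply le_of_forall_pos_le_add
    intro ε hε
    -- for each w choose an ε-good counter strategy
    have key : ∀ w : V, ∃ τw : {τ // G.IsMinStrategy τ}, 0 < G.p u w →
        (P (G.patch w (shiftStrat σ0 ([u, w]))) τw.1 w W).toReal < G.val W P w + ε := by
      intro w
      by_cases hpw : 0 < G.p u w
      · have hedge := edge_of_pos w hpw
        have hσw : G.IsMaxStrategy (G.patch w (shiftStrat σ0 ([u, w]))) :=
          G.patch_max (shiftStrat_spec_max hσ0 hedge)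
        have hlt : G.infVal W P (G.patch w (shiftStrat σ0 ([u, w]))) w < G.val W P w + ε :=
          lt_of_le_of_lt (infVal_le_val hP hσw w) (by linarith)
        obtain ⟨τw, hτw⟩ := exists_lt_of_ciInf_lt hlt
        exact ⟨τw, fun _ => hτw⟩
      · exact ⟨Classical.arbitrary _, fun h => absurd h hpw⟩
    choose t ht using key
    set τstar : List V → V := G.comb u fun w => (t w).1 with hτdef
    have hτstar : G.IsMinStrategy τstar := G.comb_min fun w => (t w).2
    have hd := G.decomp hW hTail hP hu hσ0 hτstar
    have hstep : ∀ w : V, G.p u w *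
        (P (G.patch w (shiftStrat σ0 ([u, w]))) (G.patch w (shiftStrat τstar ([u, w]))) w W).toReal
        ≤ G.p u w * (G.val W P w + ε) := by
      intro w
      rcases lt_or_eq_of_le (G.p_nonneg u hu w) with hpw | hpw
      · have hedge := edge_of_pos w hpw
        have hσw : G.IsMaxStrategy (G.patch w (shiftStrat σ0 ([u, w]))) :=
          G.patch_max (shiftStrat_spec_max hσ0 hedge)
        have hτw : G.IsMinStrategy (G.patch w (shiftStrat τstar ([u, w]))) :=
          G.patch_min (shiftStrat_spec_min hτstar hedge)
        have hagree : P (G.patch w (shiftStrat σ0 ([u, w])))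
            (G.patch w (shiftStrat τstar ([u, w]))) w = P (G.patch w (shiftStrat σ0 ([u, w])))
            (t w).1 w := by
          apply induced_eq_of_agree hP hσw hτw
          intro l hFP hh
          refine ⟨rfl, ?_⟩
          rw [G.patch_eq hFP hh, hτdef, G.comb_agree hh]
        rw [hagree]
        exact mul_le_mul_of_nonneg_left (le_of_lt (ht w hpw)) (G.p_nonneg u hu w)
      · rw [← hpw, zero_mul, zero_mul]
    calc G.infVal W P σ0 u ≤ (P σ0 τstar u W).toReal := infVal_le hτstar u
      _ = ∑ w : V, G.p u w * (P (G.patch w (shiftStrat σ0 ([u, w])))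
            (G.patch w (shiftStrat τstar ([u, w]))) w W).toReal := hd
      _ ≤ ∑ w : V, G.p u w * (G.val W P w + ε) := Finset.sum_le_sum fun w _ => hstep w
      _ = ∑ w : V, G.p u w * G.val W P w + ε := by
          have hps := G.p_sum u hu
          simp only [mul_add]
          rw [Finset.sum_add_distrib, ← Finset.sum_mul, hps, one_mul]
  · -- ∑ p val ≤ val u
    apply le_of_forall_pos_le_add
    intro ε hε
    have key : ∀ w : V, ∃ σw : {σ // G.IsMaxStrategy σ},
        G.val W P w - ε < G.infVal W P σw.1 w := by
      intro w
      have hlt : G.val W P w - ε < G.val W P w := by linarith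
      exact exists_lt_of_lt_ciSup hlt
    choose t ht using key
    set σstar : List V → V := G.comb u fun w => (t w).1 with hσdef
    have hσstar : G.IsMaxStrategy σstar := G.comb_max fun w => (t w).2
    have hbound : ∀ τ0 : {τ // G.IsMinStrategy τ},
        ∑ w : V, G.p u w * G.val W P w - ε ≤ (P σstar τ0.1 u W).toReal := by
      intro τ0
      have hd := G.decomp hW hTail hP hu hσstar τ0.2
      have hstep : ∀ w : V, G.p u w * (G.val W P w - ε) ≤ G.p u w *
          (P (G.patch w (shiftStrat σstar ([u, w])))
            (G.patch w (shiftStrat τ0.1 ([u, w]))) w W).toReal := by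
        intro w
        rcases lt_or_eq_of_le (G.p_nonneg u hu w) with hpw | hpw
        · have hedge := edge_of_pos w hpw
          have hσw : G.IsMaxStrategy (G.patch w (shiftStrat σstar ([u, w]))) :=
            G.patch_max (shiftStrat_spec_max hσstar hedge)
          have hτw : G.IsMinStrategy (G.patch w (shiftStrat τ0.1 ([u, w]))) :=
            G.patch_min (shiftStrat_spec_min τ0.2 hedge)
          have hagree : P (G.patch w (shiftStrat σstar ([u, w])))
              (G.patch w (shiftStrat τ0.1 ([u, w]))) w =
              P (t w).1 (G.patch w (shiftStrat τ0.1 ([u, w]))) w := by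
            apply induced_eq_of_agree hP hσw hτw
            intro l hFP hh
            refine ⟨?_, rfl⟩
            rw [G.patch_eq hFP hh, hσdef, G.comb_agree hh]
          rw [hagree]
          refine mul_le_mul_of_nonneg_left ?_ (G.p_nonneg u hu w)
          exact le_trans (le_of_lt (ht w)) (infVal_le (G.patch_min
            (shiftStrat_spec_min τ0.2 hedge)) w)
        · rw [← hpw, zero_mul, zero_mul]
      calc ∑ w : V, G.p u w * G.val W P w - ε
          = ∑ w : V, G.p u w * (G.val W P w - ε) := by
            have hps := G.p_sum u hu
            simp only [mul_sub]
            rw [Finset.sum_sub_distrib, ← Finset.sum_mul, hps, one_mul]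
        _ ≤ ∑ w : V, G.p u w * (P (G.patch w (shiftStrat σstar ([u, w])))
              (G.patch w (shiftStrat τ0.1 ([u, w]))) w W).toReal :=
            Finset.sum_le_sum fun w _ => hstep w
        _ = (P σstar τ0.1 u W).toReal := hd.symm
    have : ∑ w : V, G.p u w * G.val W P w - ε ≤ G.infVal W P σstar u :=
      le_ciInf fun τ0 => hbound τ0
    have h2 : G.infVal W P σstar u ≤ G.val W P u := infVal_le_val hP hσstar u
    linarith

end Val

section Main

variable {G : Game V} {W : Set (ℕ → V)} {P : StratFam V} {σ τ : List V → V}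

lemma measurable_val_comp {g : (ℕ → V) → V} (hg : Measurable g) :
    Measurable fun ω => G.val W P (g ω) := by
  have he : (fun ω => G.val W P (g ω)) = (fun x : V => G.val W P x) ∘ g := rfl
  rw [he]
  exact (measurable_of_countable _).comp hg

lemma integrable_val_comp (μ : Measure (ℕ → V)) [IsProbabilityMeasure μ]
    {g : (ℕ → V) → V} (hg : Measurable g) :
    Integrable (fun ω => G.val W P (g ω)) μ := by
  refine ⟨(measurable_val_comp hg).aestronglyMeasurable, ?_⟩
  refine HasFiniteIntegral.of_bounded (C := ∑ x : V, |G.val W P x|) ?_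
  filter_upwards with ω
  calc ‖G.val W P (g ω)‖ = |G.val W P (g ω)| := rfl
    _ ≤ ∑ x : V, |G.val W P x| :=
      Finset.single_le_sum (f := fun x : V => |G.val W P x|) (fun x _ => abs_nonneg _)
        (Finset.mem_univ (g ω))

lemma getLast?_ofFn_succ {n : ℕ} (f : Fin (n + 1) → V) :
    (List.ofFn f).getLast? = some (f ⟨n, n.lt_succ_self⟩) := by
  rw [List.getLast?_eq_getElem?]
  simp only [List.length_ofFn, Nat.add_sub_cancel, List.getElem?_ofFn]
  simp [List.ofFnNthVal]

lemma sum_step_val [Nonempty V] (hW : MeasurableSet W) (hTail : IsTail W)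
    (hP : G.IsInducedFam P) (hCons : G.Consistent W P)
    (hσ : G.IsMaxStrategy σ) (hτ : G.IsMinStrategy τ) {h : List V} {u : V}
    (hu : h.getLast? = some u) (hFP : G.FinitePlay h) :
    ∑ x : V, (G.step σ τ h u x).toReal * G.val W P x = G.val W P u := by
  rcases G.cover u with hM | hm | hR
  · have hedge : G.E u (σ h) := hσ h hFP u hu hM
    have hval : G.val W P u = G.val W P (σ h) := hCons u (σ h) hedge (Or.inl hM)
    calc ∑ x : V, (G.step σ τ h u x).toReal * G.val W P x
        = ∑ x : V, if x = σ h then G.val W P x else 0 := by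
          refine Finset.sum_congr rfl fun x _ => ?_
          rw [Game.step, if_pos hM]
          by_cases hx : x = σ h
          · rw [if_pos hx, if_pos hx]; simp
          · rw [if_neg hx, if_neg hx]; simp
      _ = G.val W P (σ h) := by rw [Finset.sum_ite_eq' Finset.univ (σ h)]; simp
      _ = G.val W P u := hval.symm
  · have hM : u ∉ G.VMax := fun hM => Set.disjoint_left.mp G.disjMm hM hm
    have hedge : G.E u (τ h) := hτ h hFP u hu hm
    have hval : G.val W P u = G.val W P (τ h) := hCons u (τ h) hedge (Or.inr hm)
    calc ∑ x : V, (G.step σ τ h u x).toReal * G.val W P x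
        = ∑ x : V, if x = τ h then G.val W P x else 0 := by
          refine Finset.sum_congr rfl fun x _ => ?_
          rw [Game.step, if_neg hM, if_pos hm]
          by_cases hx : x = τ h
          · rw [if_pos hx, if_pos hx]; simp
          · rw [if_neg hx, if_neg hx]; simp
      _ = G.val W P (τ h) := by rw [Finset.sum_ite_eq' Finset.univ (τ h)]; simp
      _ = G.val W P u := hval.symm
  · have hM : u ∉ G.VMax := fun hM => Set.disjoint_left.mp G.disjMR hM hR
    have hm : u ∉ G.Vmin := fun hm => Set.disjoint_left.mp G.disjmR hm hR
    calc ∑ x : V, (G.step σ τ h u x).toReal * G.val W P x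
        = ∑ x : V, G.p u x * G.val W P x := by
          refine Finset.sum_congr rfl fun x _ => ?_
          rw [Game.step, if_neg hM, if_neg hm, ENNReal.toReal_ofReal (G.p_nonneg u hR x)]
      _ = G.val W P u := (G.val_harmonic hW hTail hP hR).symm

lemma setIntegral_cyl_step [Nonempty V] (hW : MeasurableSet W) (hTail : IsTail W)
    (hP : G.IsInducedFam P) (hCons : G.Consistent W P)
    (hσ : G.IsMaxStrategy σ) (hτ : G.IsMinStrategy τ) (v₀ : V) {n : ℕ}
    (f : Fin (n + 1) → V) :
    ∫ ω in cyl (List.ofFn f), G.val W P (ω (n + 1)) ∂(P σ τ v₀)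
      = ∫ ω in cyl (List.ofFn f), G.val W P (ω n) ∂(P σ τ v₀) := by
  set μ := P σ τ v₀ with hμdef
  have hμ : G.IsInduced σ τ v₀ μ := hP σ τ v₀
  haveI : IsProbabilityMeasure μ := hμ.1
  set l := List.ofFn f with hldef
  have hlen : l.length = n + 1 := by rw [hldef, List.length_ofFn]
  have hlast : l.getLast? = some (f ⟨n, n.lt_succ_self⟩) := getLast?_ofFn_succ f
  set u := f ⟨n, n.lt_succ_self⟩ with hudef
  have hR : ∫ ω in cyl l, G.val W P (ω n) ∂μ = (μ (cyl l)).toReal * G.val W P u := by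
    have heq : Set.EqOn (fun ω : ℕ → V => G.val W P (ω n))
        (fun _ : ℕ → V => G.val W P u) (cyl l) := by
      intro ω hω
      rw [hldef, cyl_ofFn] at hω
      have he : ω n = u := hω ⟨n, n.lt_succ_self⟩
      show G.val W P (ω n) = G.val W P u
      rw [he]
    rw [setIntegral_congr_fun (measurableSet_cyl l) heq, setIntegral_const, smul_eq_mul]; rfl
  by_cases h0 : μ (cyl l) = 0
  · rw [hR, Measure.restrict_eq_zero.2 h0, h0]
    simp
  · have hne : l ≠ [] := by
      intro hz; rw [hz] at hlen; simp at hlen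
    have hFP : G.FinitePlay l := (hμ.finitePlay hσ hτ l h0 hne).1
    have hcov : cyl l = ⋃ x : V, cyl (l ++ [x]) := by
      ext ω
      simp only [Set.mem_iUnion, cyl_append, Set.mem_inter_iff, Set.mem_setOf_eq]
      exact ⟨fun hω => ⟨ω l.length, hω, rfl⟩, fun ⟨x, hω, _⟩ => hω⟩
    have hdisj : Pairwise (Function.onFun Disjoint fun x : V => cyl (l ++ [x])) := by
      intro x y hxy
      simp only [Function.onFun, Set.disjoint_left, cyl_append]
      rintro ω ⟨-, h1⟩ ⟨-, h2⟩
      exact hxy (h1.symm.trans h2)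
    have hInt : ∀ x : V, IntegrableOn (fun ω : ℕ → V => G.val W P (ω (n + 1)))
        (cyl (l ++ [x])) μ :=
      fun x => (integrable_val_comp μ (measurable_pi_apply (n + 1))).integrableOn
    calc ∫ ω in cyl l, G.val W P (ω (n + 1)) ∂μ
        = ∑ x : V, ∫ ω in cyl (l ++ [x]), G.val W P (ω (n + 1)) ∂μ := by
          rw [hcov]
          exact integral_iUnion_fintype (fun x => measurableSet_cyl _) hdisj hInt
      _ = ∑ x : V, (μ (cyl (l ++ [x]))).toReal * G.val W P x := by
          refine Finset.sum_congr rfl fun x _ => ?_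
          have heq : Set.EqOn (fun ω : ℕ → V => G.val W P (ω (n + 1)))
              (fun _ : ℕ → V => G.val W P x) (cyl (l ++ [x])) := by
            intro ω hω
            rw [cyl_append, Set.mem_inter_iff, Set.mem_setOf_eq, hlen] at hω
            show G.val W P (ω (n + 1)) = G.val W P x
            rw [hω.2]
          rw [setIntegral_congr_fun (measurableSet_cyl _) heq, setIntegral_const,
            smul_eq_mul]; rfl
      _ = ∑ x : V, (μ (cyl l)).toReal * ((G.step σ τ l u x).toReal * G.val W P x) := by
          refine Finset.sum_congr rfl fun x _ => ?_
          rw [hμ.measure_append hlast x, ENNReal.toReal_mul, mul_assoc]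
      _ = (μ (cyl l)).toReal * ∑ x : V, (G.step σ τ l u x).toReal * G.val W P x := by
          rw [Finset.mul_sum]
      _ = (μ (cyl l)).toReal * G.val W P u := by
          rw [sum_step_val hW hTail hP hCons hσ hτ hlast hFP]
      _ = ∫ ω in cyl l, G.val W P (ω n) ∂μ := hR.symm

lemma measurableSet_pi_fin {n : ℕ} (B : Set (Fin (n + 1) → V)) : MeasurableSet B := by
  have hB : B = ⋃ b ∈ B, {b} := by simp
  rw [hB]
  refine MeasurableSet.biUnion (Set.to_countable B) fun b _ => ?_
  have : ({b} : Set (Fin (n + 1) → V)) = ⋂ i, (fun g : Fin (n + 1) → V => g i) ⁻¹' {b i} := by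
    ext g
    simp [funext_iff]
  rw [this]
  exact MeasurableSet.iInter fun i => (measurable_pi_apply i) (measurableSet_singleton _)

lemma measurable_proj (n : ℕ) : Measurable (fun ω : ℕ → V => fun i : Fin (n + 1) => ω i) :=
  measurable_pi_lambda _ fun i => measurable_pi_apply _

lemma measurableSet_of_hist {n : ℕ} {A : Set (ℕ → V)} (hA : MeasurableSet[hist V n] A) :
    MeasurableSet A := by
  obtain ⟨B, -, rfl⟩ := hA
  exact measurable_proj n (measurableSet_pi_fin B)

lemma setIntegral_hist_step [Nonempty V] (hW : MeasurableSet W) (hTail : IsTail W)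
    (hP : G.IsInducedFam P) (hCons : G.Consistent W P)
    (hσ : G.IsMaxStrategy σ) (hτ : G.IsMinStrategy τ) (v₀ : V) {n : ℕ}
    (B : Set (Fin (n + 1) → V)) :
    ∫ ω in (fun ω : ℕ → V => fun i : Fin (n + 1) => ω i) ⁻¹' B,
        G.val W P (ω (n + 1)) ∂(P σ τ v₀)
      = ∫ ω in (fun ω : ℕ → V => fun i : Fin (n + 1) => ω i) ⁻¹' B,
        G.val W P (ω n) ∂(P σ τ v₀) := by
  haveI : IsProbabilityMeasure (P σ τ v₀) := (hP σ τ v₀).1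
  classical
  have hsplit : (fun ω : ℕ → V => fun i : Fin (n + 1) => ω i) ⁻¹' B =
      ⋃ f ∈ Finset.univ.filter (fun f : Fin (n + 1) → V => f ∈ B), cyl (List.ofFn f) := by
    ext ω
    simp only [Set.mem_preimage, Set.mem_iUnion, Finset.mem_filter, Finset.mem_univ,
      true_and, cyl_ofFn, Set.mem_setOf_eq]
    constructor
    · intro hω
      exact ⟨fun i => ω i, hω, fun i => rfl⟩
    · rintro ⟨f, hf, hω⟩
      have : (fun i : Fin (n + 1) => ω i) = f := funext fun i => hω i
      rw [this]; exact hf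
  have hdisj : (↑(Finset.univ.filter (fun f : Fin (n + 1) → V => f ∈ B)) :
      Set (Fin (n + 1) → V)).Pairwise (Function.onFun Disjoint fun f => cyl (List.ofFn f)) := by
    intro f _ g _ hfg
    simp only [Function.onFun, Set.disjoint_left, cyl_ofFn]
    rintro ω h1 h2
    exact hfg (funext fun i => (h1 i).symm.trans (h2 i))
  rw [hsplit,
    integral_biUnion_finset _ (fun f _ => measurableSet_cyl _) hdisj
      (fun f _ => (integrable_val_comp _ (measurable_pi_apply (n + 1))).integrableOn),
    integral_biUnion_finset _ (fun f _ => measurableSet_cyl _) hdisj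
      (fun f _ => (integrable_val_comp _ (measurable_pi_apply n)).integrableOn)]
  exact Finset.sum_congr rfl fun f _ => setIntegral_cyl_step hW hTail hP hCons hσ hτ v₀ f

lemma integral_val_zero [Nonempty V] (hP : G.IsInducedFam P)
    (hσ : G.IsMaxStrategy σ) (hτ : G.IsMinStrategy τ) (v₀ : V) :
    ∫ ω, G.val W P (ω 0) ∂(P σ τ v₀) = G.val W P v₀ := by
  set μ := P σ τ v₀
  have hμ : G.IsInduced σ τ v₀ μ := hP σ τ v₀
  haveI : IsProbabilityMeasure μ := hμ.1
  have h1 : μ {ω : ℕ → V | ω 0 = v₀} = 1 := hμ.2.1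
  have h0 : μ {ω : ℕ → V | ω 0 = v₀}ᶜ = 0 := by
    rw [prob_compl_eq_one_sub (measurableSet_eval 0 v₀), h1, tsub_self]
  have hae : (fun ω : ℕ → V => G.val W P (ω 0)) =ᵐ[μ] fun _ => G.val W P v₀ := by
    rw [Filter.EventuallyEq, ae_iff]
    refine measure_mono_null ?_ h0
    intro ω hω
    simp only [Set.mem_setOf_eq] at hω ⊢
    intro he
    exact hω (by rw [he])
  rw [integral_congr_ae hae, integral_const]
  simp

end Main

lemma stopped_le_set_eq {N : (ℕ → V) → ℕ∞} {n k : ℕ} (hnk : ¬ n ≤ k) :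
    {ω : ℕ → V | (min (N ω) (n : ℕ∞)).toNat ≤ k} = {ω : ℕ → V | N ω ≤ (k : ℕ∞)} := by
  ext ω
  simp only [Set.mem_setOf_eq]
  cases hNω : N ω with
  | top =>
    simp only [min_eq_right (le_top : (n:ℕ∞) ≤ ⊤), ENat.toNat_coe]
    constructor
    · intro h; exact absurd h hnk
    · intro h; exact absurd h (by simp)
  | coe m =>
    have hmin : min ((m : ℕ∞)) ((n : ℕ∞)) = ((min m n : ℕ) : ℕ∞) := by
      rcases le_total m n with h | h
      · rw [min_eq_left (by exact_mod_cast h), min_eq_left h]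
      · rw [min_eq_right (by exact_mod_cast h), min_eq_right h]
    rw [hmin, ENat.toNat_coe]
    constructor
    · intro h
      have hm : m ≤ k := by omega
      exact_mod_cast hm
    · intro h
      have hm : m ≤ k := by exact_mod_cast h
      omega

lemma measurable_stopped {N : (ℕ → V) → ℕ∞} (n : ℕ)
    (hN : ∀ k : ℕ, MeasurableSet {ω : ℕ → V | N ω ≤ (k : ℕ∞)}) :
    Measurable fun ω : ℕ → V => ω ((min (N ω) (n : ℕ∞)).toNat) := by
  have hK : ∀ k : ℕ, MeasurableSet {ω : ℕ → V | (min (N ω) (n : ℕ∞)).toNat ≤ k} := by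
    intro k
    by_cases hnk : n ≤ k
    · have : {ω : ℕ → V | (min (N ω) (n : ℕ∞)).toNat ≤ k} = Set.univ := by
        apply Set.eq_univ_of_forall
        intro ω
        simp only [Set.mem_setOf_eq]
        calc (min (N ω) (n : ℕ∞)).toNat ≤ ((n : ℕ∞)).toNat := by
              cases hNω : N ω with
              | top => simp
              | coe m =>
                have hmin : min ((m : ℕ∞)) ((n : ℕ∞)) = ((min m n : ℕ) : ℕ∞) := by
                  rcases le_total m n with h | h
                  · rw [min_eq_left (by exact_mod_cast h), min_eq_left h]
                  · rw [min_eq_right (by exact_mod_cast h), min_eq_right h]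
                rw [hmin, ENat.toNat_coe, ENat.toNat_coe]
                omega
          _ ≤ k := by rw [ENat.toNat_coe]; exact hnk
      rw [this]; exact MeasurableSet.univ
    · rw [stopped_le_set_eq hnk]; exact hN k
  have hKm : ∀ k : ℕ, MeasurableSet {ω : ℕ → V | (min (N ω) (n : ℕ∞)).toNat = k} := by
    intro k
    cases k with
    | zero =>
      have : {ω : ℕ → V | (min (N ω) (n : ℕ∞)).toNat = 0} =
          {ω : ℕ → V | (min (N ω) (n : ℕ∞)).toNat ≤ 0} := by
        ext ω; simp [Nat.le_zero]
      rw [this]; exact hK 0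
    | succ m =>
      have : {ω : ℕ → V | (min (N ω) (n : ℕ∞)).toNat = m + 1} =
          {ω : ℕ → V | (min (N ω) (n : ℕ∞)).toNat ≤ m + 1} \
            {ω : ℕ → V | (min (N ω) (n : ℕ∞)).toNat ≤ m} := by
        ext ω; simp only [Set.mem_setOf_eq, Set.mem_diff]; omega
      rw [this]; exact (hK (m + 1)).diff (hK m)
  apply measurable_to_countable'
  intro x
  have : (fun ω : ℕ → V => ω ((min (N ω) (n : ℕ∞)).toNat)) ⁻¹' {x} =
      ⋃ k : ℕ, {ω : ℕ → V | (min (N ω) (n : ℕ∞)).toNat = k} ∩ {ω : ℕ → V | ω k = x} := by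
    ext ω
    simp only [Set.mem_preimage, Set.mem_singleton_iff, Set.mem_iUnion, Set.mem_inter_iff,
      Set.mem_setOf_eq]
    constructor
    · intro hω
      exact ⟨(min (N ω) (n : ℕ∞)).toNat, rfl, hω⟩
    · rintro ⟨k, hk, hω⟩
      rw [hk]; exact hω
  rw [this]
  exact MeasurableSet.iUnion fun k => (hKm k).inter (measurableSet_eval k x)
/-- in a consistent game, `E[val(Vₙ)] = val(v₀)` for every `n`; in particular
the same holds for the process stopped at any stopping time. -/
theorem val_expectation_constant
    (G : Game V) (W : Set (ℕ → V)) (hW : MeasurableSet W) (hTail : IsTail W)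
    (P : StratFam V) (hP : G.IsInducedFam P) (hCons : G.Consistent W P)
    (σ τ : List V → V) (hσ : G.IsMaxStrategy σ) (hτ : G.IsMinStrategy τ) (v₀ : V) :
    (∀ n : ℕ, ∫ ω, G.val W P (ω n) ∂(P σ τ v₀) = G.val W P v₀) ∧
    ∀ N : (ℕ → V) → ℕ∞, (∀ n : ℕ, MeasurableSet[hist V n] {ω | N ω ≤ (n : ℕ∞)}) →
      ∀ n : ℕ,
        ∫ ω, G.val W P (ω ((min (N ω) (n : ℕ∞)).toNat)) ∂(P σ τ v₀) = G.val W P v₀ := by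
  haveI : Nonempty V := ⟨v₀⟩
  set μ := P σ τ v₀ with hμdef
  haveI : IsProbabilityMeasure μ := (hP σ τ v₀).1
  have hstep : ∀ n : ℕ, ∫ ω, G.val W P (ω (n + 1)) ∂μ = ∫ ω, G.val W P (ω n) ∂μ := by
    intro n
    have h := setIntegral_hist_step hW hTail hP hCons hσ hτ v₀
      (Set.univ : Set (Fin (n + 1) → V))
    rwa [Set.preimage_univ, Measure.restrict_univ] at h
  have part1 : ∀ n : ℕ, ∫ ω, G.val W P (ω n) ∂μ = G.val W P v₀ := by
    intro n
    induction n with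
    | zero => exact integral_val_zero hP hσ hτ v₀
    | succ m ih => rw [hstep m]; exact ih
  refine ⟨part1, ?_⟩
  intro N hN n
  have hNk : ∀ k : ℕ, MeasurableSet {ω : ℕ → V | N ω ≤ (k : ℕ∞)} :=
    fun k => measurableSet_of_hist (hN k)
  induction n with
  | zero =>
    have e : ∀ ω : ℕ → V, (min (N ω) ((0 : ℕ) : ℕ∞)).toNat = 0 := by
      intro ω; simp
    calc ∫ ω, G.val W P (ω ((min (N ω) ((0 : ℕ) : ℕ∞)).toNat)) ∂μ
        = ∫ ω, G.val W P (ω 0) ∂μ := by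
          apply integral_congr_ae
          filter_upwards with ω
          rw [e ω]
      _ = G.val W P v₀ := part1 0
  | succ m ih =>
    set A : Set (ℕ → V) := {ω | N ω ≤ (m : ℕ∞)} with hAdef
    have hAmeas : MeasurableSet A := hNk m
    have hint1 : Integrable (fun ω : ℕ → V =>
        G.val W P (ω ((min (N ω) (m : ℕ∞)).toNat))) μ :=
      integrable_val_comp μ (measurable_stopped m hNk)
    have hint2 : Integrable (fun ω : ℕ → V =>
        G.val W P (ω ((min (N ω) ((m + 1 : ℕ) : ℕ∞)).toNat))) μ :=
      integrable_val_comp μ (measurable_stopped (m + 1) hNk)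
    have hOnA : ∫ ω in A, G.val W P (ω ((min (N ω) ((m + 1 : ℕ) : ℕ∞)).toNat)) ∂μ =
        ∫ ω in A, G.val W P (ω ((min (N ω) (m : ℕ∞)).toNat)) ∂μ := by
      apply setIntegral_congr_fun hAmeas
      intro ω hω
      have hωA : N ω ≤ (m : ℕ∞) := hω
      have e1 : min (N ω) ((m + 1 : ℕ) : ℕ∞) = N ω :=
        min_eq_left (le_trans hωA (by exact_mod_cast Nat.le_succ m))
      have e2 : min (N ω) ((m : ℕ)  : ℕ∞) = N ω := min_eq_left hωA
      show G.val W P (ω ((min (N ω) ((m + 1 : ℕ) : ℕ∞)).toNat)) =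
        G.val W P (ω ((min (N ω) ((m : ℕ) : ℕ∞)).toNat))
      rw [e1, e2]
    have hOnAc1 : ∫ ω in Aᶜ, G.val W P (ω ((min (N ω) ((m + 1 : ℕ) : ℕ∞)).toNat)) ∂μ =
        ∫ ω in Aᶜ, G.val W P (ω (m + 1)) ∂μ := by
      apply setIntegral_congr_fun hAmeas.compl
      intro ω hω
      have hωA : ¬ N ω ≤ (m : ℕ∞) := hω
      have hle : ((m + 1 : ℕ) : ℕ∞) ≤ N ω := by
        have hlt : (m : ℕ∞) < N ω := not_le.1 hωA
        exact_mod_cast Order.add_one_le_of_lt hlt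
      have e1 : min (N ω) ((m + 1 : ℕ) : ℕ∞) = ((m + 1 : ℕ) : ℕ∞) := min_eq_right hle
      show G.val W P (ω ((min (N ω) ((m + 1 : ℕ) : ℕ∞)).toNat)) = G.val W P (ω (m + 1))
      rw [e1, ENat.toNat_coe]
    have hOnAc2 : ∫ ω in Aᶜ, G.val W P (ω ((min (N ω) ((m : ℕ) : ℕ∞)).toNat)) ∂μ =
        ∫ ω in Aᶜ, G.val W P (ω m) ∂μ := by
      apply setIntegral_congr_fun hAmeas.compl
      intro ω hω
      have hωA : ¬ N ω ≤ (m : ℕ∞) := hω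
      have hle : ((m : ℕ) : ℕ∞) ≤ N ω := le_of_lt (not_le.1 hωA)
      have e1 : min (N ω) ((m : ℕ) : ℕ∞) = ((m : ℕ) : ℕ∞) := min_eq_right hle
      show G.val W P (ω ((min (N ω) ((m : ℕ) : ℕ∞)).toNat)) = G.val W P (ω m)
      rw [e1, ENat.toNat_coe]
    have hhist : ∫ ω in Aᶜ, G.val W P (ω (m + 1)) ∂μ =
        ∫ ω in Aᶜ, G.val W P (ω m) ∂μ := by
      obtain ⟨B, -, hB⟩ := MeasurableSpace.measurableSet_comap.1 (hN m).compl
      rw [← hB]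
      exact setIntegral_hist_step hW hTail hP hCons hσ hτ v₀ B
    calc ∫ ω, G.val W P (ω ((min (N ω) ((m + 1 : ℕ) : ℕ∞)).toNat)) ∂μ
        = (∫ ω in A, G.val W P (ω ((min (N ω) ((m + 1 : ℕ) : ℕ∞)).toNat)) ∂μ) +
          ∫ ω in Aᶜ, G.val W P (ω ((min (N ω) ((m + 1 : ℕ) : ℕ∞)).toNat)) ∂μ :=
          (integral_add_compl hAmeas hint2).symm
      _ = (∫ ω in A, G.val W P (ω ((min (N ω) (m : ℕ∞)).toNat)) ∂μ) +
          ∫ ω in Aᶜ, G.val W P (ω ((min (N ω) (m : ℕ∞)).toNat)) ∂μ := by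
          rw [hOnA, hOnAc1, hhist, ← hOnAc2]
      _ = ∫ ω, G.val W P (ω ((min (N ω) (m : ℕ∞)).toNat)) ∂μ :=
          integral_add_compl hAmeas hint1
      _ = G.val W P v₀ := ih

end StochasticGames
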